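/- Let 0 ≤ t₀ < T, let λ₁, λ₂ : [t₀,T] → ℝ be continuous with λ₁(t) > 0, λ₂(t) > 0 and λ₁(t) + λ₂(t) = 1 for all t, and let U₁, U₂ : [t₀,T] → ℝ be continuous with U₁(t) < U₂(t) for all t. Assume that for every t ∈ (t₀,T] and each j ∈ {1,2}, limsup_{h↓0} |U_j(t) − U_j(t−h)|/√h < 4·√(λ_j(t)). Then there exists ε > 0, independent of the initial value, such that every continuous x : [t₀,T] → ℝ with x(t₀) ∉ {U₁(t₀), U₂(t₀)}, with x(t) ∉ {U₁(t), U₂(t)} for all t ∈ [t₀,T), and differentiable on [t₀,T) with x'(t) = 2·λ₁(t)/(x(t) − U₁(t)) + 2·λ₂(t)/(x(t) − U₂(t)), satisfies |x(T) − U₁(T)| > ε and |x(T) − U₂(T)| > ε. -/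

import Mathlib

open Filter Set Real

noncomputable section


private lemma core_arith (c lam s A W : ℝ) (hsp : 0 < s) (hWpsi : 2*lam ≤ W * A) :
    (2 * A * (c - W*(2*s)) * (2*s^2) - A^2 * (2*(2*s)))/(2*s^2)^2 + (4*lam - c^2/4) * s⁻¹ ≤ 0 := by
  have hrw : (2 * A * (c - W*(2*s)) * (2*s^2) - A^2 * (2*(2*s)))/(2*s^2)^2 + (4*lam - c^2/4) * s⁻¹
      = (4*s^2*A*(c - W*(2*s)) - 4*s*A^2 + 4*(4*lam - c^2/4)*s^3) / (4*s^4) := by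
    field_simp
  rw [hrw]
  apply div_nonpos_of_nonpos_of_nonneg _ (by positivity)
  have h1 : 2*lam*(8*s^3) ≤ (W * A)*(8*s^3) :=
    mul_le_mul_of_nonneg_right hWpsi (by positivity)
  nlinarith [mul_nonneg hsp.le (sq_nonneg (2*A - c*s)), h1]

set_option maxHeartbeats 1000000 in
private lemma core_lemma (c lam H ε' : ℝ) (w : ℝ → ℝ)
    (hc : 0 ≤ c) (hm : 0 < 4*lam - c^2/4) (hH : 0 < H) (hε' : 0 ≤ ε')
    (hwc : ContinuousOn w (Set.Icc 0 H)) (hw0 : w 0 = -ε')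
    (hψ : ∀ h ∈ Set.Ioo (0:ℝ) H, w h < c * Real.sqrt h)
    (hw' : ∀ h ∈ Set.Ioo (0:ℝ) H, -Real.sqrt H ≤ w h →
      ∃ W, HasDerivAt w W h ∧ 2*lam/(c*Real.sqrt h - w h) ≤ W) :
    Real.sqrt H * Real.exp (-(c+1)^2/(2*(4*lam - c^2/4)))/4 ≤ ε' := by
  have hlam : 0 < lam := by nlinarith [sq_nonneg c]
  set m : ℝ := 4*lam - c^2/4 with hm_def
  set K : ℝ := (c+1)^2/(2*m) with hK_def
  have hK0 : 0 ≤ K := by positivity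
  clear_value m K
  have hsH : 0 < Real.sqrt H := Real.sqrt_pos.2 hH
  have hexpK : Real.exp (-K) ≤ 1 := Real.exp_le_one_iff.2 (by linarith)
  have hexpKpos : 0 < Real.exp (-K) := Real.exp_pos _
  -- goal rewrite
  rw [show -(c+1)^2/(2*m) = -K by rw [hK_def]; ring]
  by_cases hbig : Real.sqrt H / 4 ≤ ε'
  · calc Real.sqrt H * Real.exp (-K) / 4 ≤ Real.sqrt H * 1 / 4 := by gcongr
    _ ≤ ε' := by linarith
  push_neg at hbig
  -- Step (a)
  have ha : ∀ h ∈ Set.Ico (0:ℝ) H, -ε' ≤ w h := by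
    by_contra hcon
    push_neg at hcon
    obtain ⟨h₁, hh₁, hlt⟩ := hcon
    set b' : ℝ := max (w h₁) (-(ε' + Real.sqrt H)/2) with hb'_def
    have hb'1 : b' < -ε' := max_lt hlt (by linarith)
    have hb'2 : -Real.sqrt H < b' := lt_of_lt_of_le (by linarith) (le_max_right _ _)
    have h₁0 : 0 < h₁ := by
      rcases lt_or_eq_of_le hh₁.1 with h | h
      · exact h
      · exfalso; rw [← h, hw0] at hlt; exact absurd hlt (lt_irrefl _)
    set S : Set ℝ := Set.Icc 0 h₁ ∩ w ⁻¹' (Set.Iic b') with hS_def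
    have hSclosed : IsClosed S :=
      (hwc.mono (Set.Icc_subset_Icc le_rfl hh₁.2.le)).preimage_isClosed_of_isClosed
        isClosed_Icc isClosed_Iic
    have hSne : S.Nonempty := ⟨h₁, ⟨hh₁.1, le_rfl⟩, Set.mem_preimage.2 (Set.mem_Iic.2 (le_max_left _ _))⟩
    have hSbdd : BddBelow S := ⟨0, fun y hy => hy.1.1⟩
    set h₂ : ℝ := sInf S with hh₂_def
    have hh₂S : h₂ ∈ S := hSclosed.csInf_mem hSne hSbdd
    have hh₂pos : 0 < h₂ := by
      rcases lt_or_eq_of_le hh₂S.1.1 with h | h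
      · exact h
      · exfalso
        have := hh₂S.2
        rw [← h, Set.mem_preimage, Set.mem_Iic, hw0] at this
        linarith
    have hkey : ∀ h ∈ Set.Ico (0:ℝ) h₂, b' < w h := by
      intro h hh
      by_contra hw
      push_neg at hw
      have : h ∈ S := ⟨⟨hh.1, hh.2.le.trans hh₂S.1.2⟩, hw⟩
      exact absurd (csInf_le hSbdd this) (not_le.2 hh.2)
    have hmono : StrictMonoOn w (Set.Icc 0 h₂) := by
      apply strictMonoOn_of_deriv_pos (convex_Icc 0 h₂)
        (hwc.mono (Set.Icc_subset_Icc le_rfl (hh₂S.1.2.trans hh₁.2.le)))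
      intro s hs
      rw [interior_Icc] at hs
      have hsIoo : s ∈ Set.Ioo (0:ℝ) H := ⟨hs.1, lt_of_lt_of_le (hs.2.trans_le hh₂S.1.2) hh₁.2.le⟩
      have hguard : -Real.sqrt H ≤ w s := (hb'2.trans (hkey s ⟨hs.1.le, hs.2⟩)).le
      obtain ⟨W, hW, hWlb⟩ := hw' s hsIoo hguard
      rw [hW.deriv]
      have : 0 < c * Real.sqrt s - w s := sub_pos.2 (hψ s hsIoo)
      calc (0:ℝ) < 2*lam/(c*Real.sqrt s - w s) := by positivity
        _ ≤ W := hWlb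
    have : w 0 < w h₂ := hmono ⟨le_rfl, hh₂pos.le⟩ ⟨hh₂pos.le, le_rfl⟩ hh₂pos
    rw [hw0] at this
    have := hh₂S.2
    rw [Set.mem_preimage, Set.mem_Iic] at this
    linarith [hh₂S.2]
  -- Step (b)
  set s₀ : ℝ := Real.sqrt H / 2 with hs₀_def
  have hs₀pos : 0 < s₀ := by positivity
  set s₁ : ℝ := max ε' (s₀ * Real.exp (-K) / 2) with hs₁_def
  clear_value s₀
  have hs₁pos : 0 < s₁ := by
    rw [hs₁_def]
    exact lt_of_lt_of_le (by positivity) (le_max_right _ _)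
  have hs₁s₀ : s₁ < s₀ := by
    rw [hs₁_def]
    apply max_lt
    · calc ε' < Real.sqrt H / 4 := hbig
        _ < s₀ := by rw [hs₀_def]; linarith
    · calc s₀ * Real.exp (-K) / 2 ≤ s₀ * 1 / 2 := by gcongr
        _ < s₀ := by linarith
  have hs₀sq : s₀^2 = H/4 := by
    rw [hs₀_def, div_pow, Real.sq_sqrt hH.le]; norm_num
  have hmemIoo : ∀ s ∈ Set.Icc s₁ s₀, s^2 ∈ Set.Ioo (0:ℝ) H := by
    intro s hs
    have hsp : 0 < s := lt_of_lt_of_le hs₁pos hs.1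
    constructor
    · positivity
    · have : s^2 ≤ s₀^2 := by nlinarith [hs.2]
      rw [hs₀sq] at this; linarith
  set ψ : ℝ → ℝ := fun s => c * s - w (s^2) with hψ_def
  clear_value s₁
  have hψpos : ∀ s ∈ Set.Icc s₁ s₀, 0 < ψ s := by
    intro s hs
    have hsp : 0 < s := lt_of_lt_of_le hs₁pos hs.1
    have h1 := hψ (s^2) (hmemIoo s hs)
    rw [Real.sqrt_sq hsp.le] at h1
    simp only [hψ_def]
    linarith
  have hwge : ∀ s ∈ Set.Icc s₁ s₀, -ε' ≤ w (s^2) := by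
    intro s hs
    exact ha (s^2) ⟨(hmemIoo s hs).1.le, (hmemIoo s hs).2⟩
  set Q : ℝ → ℝ := fun s => (ψ s)^2/(2*s^2) + m * Real.log s with hQ_def
  clear_value ψ Q
  -- continuity of Q
  have hψcont : ContinuousOn ψ (Set.Icc s₁ s₀) := by
    rw [hψ_def]
    apply ContinuousOn.sub
    · exact (continuous_const.mul continuous_id).continuousOn
    · apply hwc.comp (continuous_pow 2).continuousOn
      intro s hs
      exact ⟨(hmemIoo s hs).1.le, (hmemIoo s hs).2.le⟩
  have hQcont : ContinuousOn Q (Set.Icc s₁ s₀) := by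
    rw [hQ_def]
    apply ContinuousOn.add
    · apply ContinuousOn.div (hψcont.pow 2)
        ((continuous_const.mul (continuous_pow 2)).continuousOn)
      intro s hs
      have : 0 < s := lt_of_lt_of_le hs₁pos hs.1
      have h2 : (2:ℝ)*s^2 ≠ 0 := by positivity
      exact h2
    · apply ContinuousOn.mul continuousOn_const
      apply Real.continuousOn_log.mono
      intro s hs
      simp only [Set.mem_compl_iff, Set.mem_singleton_iff]
      exact ne_of_gt (lt_of_lt_of_le hs₁pos hs.1)
  -- derivative of Q nonpositive
  have hQd : ∀ s ∈ Set.Ioo s₁ s₀, ∃ D, HasDerivAt Q D s ∧ D ≤ 0 := by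
    intro s hs
    rw [hQ_def]
    have hsIcc : s ∈ Set.Icc s₁ s₀ := ⟨hs.1.le, hs.2.le⟩
    have hsp : 0 < s := lt_of_lt_of_le hs₁pos hs.1.le
    have hh : s^2 ∈ Set.Ioo (0:ℝ) H := hmemIoo s hsIcc
    have hguard : -Real.sqrt H ≤ w (s^2) := by
      have := hwge s hsIcc
      have h4 : ε' ≤ Real.sqrt H := by linarith
      linarith
    obtain ⟨W, hW, hWlb⟩ := hw' (s^2) hh hguard
    rw [Real.sqrt_sq hsp.le] at hWlb
    have hψs : 0 < ψ s := hψpos s hsIcc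
    have hWψ : 2*lam ≤ W * ψ s := by
      have := (div_le_iff₀ (by simpa [hψ_def] using hψs)).mp hWlb
      calc 2*lam ≤ W * (c * s - w (s^2)) := this
        _ = W * ψ s := by rw [hψ_def]
    have hw2 : HasDerivAt (fun u : ℝ => w (u^2)) (W * (2*s)) s := by
      have h2 : HasDerivAt (fun u : ℝ => u^2) (2*s) s := by
        simpa using hasDerivAt_pow 2 s
      exact HasDerivAt.comp s hW h2
    have hψd : HasDerivAt ψ (c - W*(2*s)) s := by
      rw [hψ_def]
      have h1 : HasDerivAt (fun u : ℝ => c * u) c s := by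
        simpa using (hasDerivAt_id s).const_mul c
      exact h1.sub hw2
    have hnum : HasDerivAt (fun u => (ψ u)^2) (2 * ψ s * (c - W*(2*s))) s := by
      have := hψd.fun_pow 2
      simpa [mul_comm, mul_assoc] using this
    have hden : HasDerivAt (fun u : ℝ => 2*u^2) (2*(2*s)) s := by
      simpa using (hasDerivAt_pow 2 s).const_mul 2
    have hdenne : 2*s^2 ≠ 0 := by positivity
    have hdiv : HasDerivAt (fun u => (ψ u)^2/(2*u^2))
        ((2 * ψ s * (c - W*(2*s)) * (2*s^2) - (ψ s)^2 * (2*(2*s)))/(2*s^2)^2) s :=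
      hnum.div hden hdenne
    have hlog : HasDerivAt (fun u : ℝ => m * Real.log u) (m * s⁻¹) s :=
      (Real.hasDerivAt_log (ne_of_gt hsp)).const_mul m
    refine ⟨_, hdiv.add hlog, ?_⟩
    rw [hm_def]
    exact core_arith c lam s (ψ s) W hsp hWψ
  -- antitone
  have hQanti : AntitoneOn Q (Set.Icc s₁ s₀) := by
    apply antitoneOn_of_deriv_nonpos (convex_Icc s₁ s₀) hQcont
    · intro s hs
      rw [interior_Icc] at hs
      obtain ⟨D, hD, _⟩ := hQd s hs
      exact hD.differentiableAt.differentiableWithinAt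
    · intro s hs
      rw [interior_Icc] at hs
      obtain ⟨D, hD, hD0⟩ := hQd s hs
      rw [hD.deriv]; exact hD0
  have hQle : Q s₀ ≤ Q s₁ :=
    hQanti ⟨le_rfl, hs₁s₀.le⟩ ⟨hs₁s₀.le, le_rfl⟩ hs₁s₀.le
  -- bounds
  have hψs₁le : ψ s₁ ≤ (c+1)*s₁ := by
    have h1 : -ε' ≤ w (s₁^2) := hwge s₁ ⟨le_rfl, hs₁s₀.le⟩
    have h2 : ε' ≤ s₁ := by rw [hs₁_def]; exact le_max_left _ _
    simp only [hψ_def]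
    linarith
  have hψs₁pos : 0 < ψ s₁ := hψpos s₁ ⟨le_rfl, hs₁s₀.le⟩
  have hQs₁ : Q s₁ ≤ (c+1)^2/2 + m * Real.log s₁ := by
    have h1 : (ψ s₁)^2 ≤ ((c+1)*s₁)^2 := pow_le_pow_left₀ hψs₁pos.le hψs₁le 2
    have h2 : (ψ s₁)^2/(2*s₁^2) ≤ ((c+1)*s₁)^2/(2*s₁^2) := by gcongr
    have h3 : ((c+1)*s₁)^2/(2*s₁^2) = (c+1)^2/2 := by
      field_simp
    simp only [hQ_def]
    rw [h3] at h2
    linarith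
  have hQs₀ : m * Real.log s₀ ≤ Q s₀ := by
    simp only [hQ_def]
    have : 0 ≤ (ψ s₀)^2/(2*s₀^2) := by positivity
    linarith
  have hlogs : Real.log s₀ - Real.log s₁ ≤ K := by
    have h1 : m * (Real.log s₀ - Real.log s₁) ≤ (c+1)^2/2 := by
      have e1 := hQs₀; have e2 := hQle; have e3 := hQs₁
      nlinarith [e1, e2, e3]
    rw [hK_def, le_div_iff₀ (by linarith : (0:ℝ) < 2*m)]
    nlinarith [h1]
  have hs₀le : s₀ ≤ Real.exp K * s₁ := by
    calc s₀ = Real.exp (Real.log s₀) := (Real.exp_log hs₀pos).symm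
      _ ≤ Real.exp (K + Real.log s₁) := Real.exp_le_exp.2 (by linarith)
      _ = Real.exp K * s₁ := by rw [Real.exp_add, Real.exp_log hs₁pos]
  have hfinal : s₀ * Real.exp (-K) ≤ s₁ := by
    calc s₀ * Real.exp (-K) ≤ (Real.exp K * s₁) * Real.exp (-K) :=
          mul_le_mul_of_nonneg_right hs₀le hexpKpos.le
      _ = s₁ := by rw [mul_comm (Real.exp K) s₁, mul_assoc, ← Real.exp_add]; simp
  have hcase : ε' = s₁ := by
    rw [hs₁_def]
    by_cases hc' : ε' ≤ s₀ * Real.exp (-K) / 2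
    · exfalso
      have heq : s₁ = s₀ * Real.exp (-K) / 2 := by rw [hs₁_def]; exact max_eq_right hc'
      rw [heq] at hfinal
      nlinarith [mul_pos hs₀pos hexpKpos]
    · push_neg at hc'
      exact (max_eq_left hc'.le).symm
  calc Real.sqrt H * Real.exp (-K)/4 ≤ s₀ * Real.exp (-K) := by
        rw [hs₀_def]; nlinarith [mul_nonneg hsH.le hexpKpos.le]
    _ ≤ s₁ := hfinal
    _ = ε' := hcase.symm

set_option maxHeartbeats 1000000 in
private lemma key_lemma (t₀ T c lam d₀ H : ℝ) (x U : ℝ → ℝ) (σ : ℝ)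
    (hc : 0 ≤ c) (hσ : σ = 1 ∨ σ = -1)
    (hm : 0 < 4*lam - c^2/4)
    (hH0 : 0 < H) (hHT : H < T - t₀)
    (hHd₀ : (c+1) * Real.sqrt H ≤ d₀)
    (hhold : ∀ h ∈ Set.Ioo (0:ℝ) H, |U T - U (T - h)| ≤ c * Real.sqrt h)
    (hxc : ContinuousOn x (Set.Icc t₀ T))
    (hUc : ContinuousOn U (Set.Icc t₀ T))
    (hdpos : ∀ t ∈ Set.Ico t₀ T, 0 < σ * (U t - x t))
    (hode : ∀ t ∈ Set.Ioo (T - H) T, σ * (U t - x t) ≤ d₀ →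
      ∃ D, HasDerivAt x D t ∧ 2*lam/(σ * (U t - x t)) ≤ -σ*D) :
    Real.sqrt H * Real.exp (-(c+1)^2/(2*(4*lam - c^2/4)))/4 ≤ σ * (U T - x T) := by
  have htT : t₀ < T := by linarith
  have hTmem : T ∈ Set.Icc t₀ T := ⟨htT.le, le_rfl⟩
  have hφc : ContinuousOn (fun t => σ * (U t - x t)) (Set.Icc t₀ T) :=
    continuousOn_const.mul (hUc.sub hxc)
  have hcl : T ∈ closure (Set.Ico t₀ T) := by
    rw [closure_Ico htT.ne]
    exact ⟨htT.le, le_rfl⟩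
  have hNB : (nhdsWithin T (Set.Ico t₀ T)).NeBot := mem_closure_iff_nhdsWithin_neBot.mp hcl
  have hε'0 : 0 ≤ σ * (U T - x T) := by
    have hlim : Filter.Tendsto (fun t => σ * (U t - x t)) (nhdsWithin T (Set.Ico t₀ T))
        (nhds (σ * (U T - x T))) :=
      (hφc T hTmem).mono_left (nhdsWithin_mono T Set.Ico_subset_Icc_self)
    exact ge_of_tendsto hlim
      (Filter.eventually_of_mem self_mem_nhdsWithin fun t ht => (hdpos t ht).le)
  set w : ℝ → ℝ := fun h => σ * (x (T - h) - U T) with hw_def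
  have hmaps : ∀ h ∈ Set.Icc (0:ℝ) H, T - h ∈ Set.Icc t₀ T := by
    intro h hh
    constructor <;> [linarith [hh.2]; linarith [hh.1]]
  have hwc : ContinuousOn w (Set.Icc 0 H) := by
    apply ContinuousOn.mul continuousOn_const
    apply ContinuousOn.sub _ continuousOn_const
    exact hxc.comp ((continuous_const.sub continuous_id).continuousOn) hmaps
  have hw0 : w 0 = -(σ * (U T - x T)) := by
    simp only [hw_def]
    ring_nf
  have habs : ∀ h ∈ Set.Ioo (0:ℝ) H, σ * (U (T - h) - U T) ≤ c * Real.sqrt h := by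
    intro h hh
    have h2 : |U T - U (T - h)| ≤ c * Real.sqrt h := hhold h hh
    have h3 : σ * (U (T - h) - U T) ≤ |U (T - h) - U T| := by
      rcases hσ with h4 | h4 <;> rw [h4]
      · simpa using le_abs_self (U (T - h) - U T)
      · rw [neg_one_mul]
        exact neg_le_abs (U (T - h) - U T)
    rw [abs_sub_comm] at h3
    linarith
  have hid : ∀ h : ℝ, c * Real.sqrt h - w h
      = σ * (U (T - h) - x (T - h)) + (c * Real.sqrt h - σ * (U (T - h) - U T)) := by
    intro h
    simp only [hw_def]
    ring
  have htIco : ∀ h ∈ Set.Ioo (0:ℝ) H, T - h ∈ Set.Ico t₀ T := by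
    intro h hh
    constructor <;> [linarith [hh.2]; linarith [hh.1]]
  have hψcore : ∀ h ∈ Set.Ioo (0:ℝ) H, w h < c * Real.sqrt h := by
    intro h hh
    have h1 : 0 < σ * (U (T - h) - x (T - h)) := hdpos _ (htIco h hh)
    have h2 := habs h hh
    have h3 := hid h
    linarith
  have hw'core : ∀ h ∈ Set.Ioo (0:ℝ) H, -Real.sqrt H ≤ w h →
      ∃ W, HasDerivAt w W h ∧ 2*lam/(c*Real.sqrt h - w h) ≤ W := by
    intro h hh hguard
    have hdp : 0 < σ * (U (T - h) - x (T - h)) := hdpos _ (htIco h hh)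
    have hdle1 : σ * (U (T - h) - x (T - h)) ≤ c * Real.sqrt h - w h := by
      have := habs h hh
      have h3 := hid h
      linarith
    have hsqle : Real.sqrt h ≤ Real.sqrt H := Real.sqrt_le_sqrt hh.2.le
    have hcs : c * Real.sqrt h ≤ c * Real.sqrt H := mul_le_mul_of_nonneg_left hsqle hc
    have hdled : σ * (U (T - h) - x (T - h)) ≤ d₀ := by
      have h3 := hid h
      nlinarith [habs h hh]
    obtain ⟨D, hD, hDle⟩ := hode (T - h) ⟨by linarith [hh.2], by linarith [hh.1]⟩ hdled
    refine ⟨σ * (D * (-1)), ?_, ?_⟩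
    · have h1 : HasDerivAt (fun u : ℝ => T - u) (-1) h := by
        simpa using (hasDerivAt_id h).const_sub T
      have h2 : HasDerivAt (fun u : ℝ => x (T - u)) (D * (-1)) h :=
        HasDerivAt.comp h hD h1
      have h3 := (h2.sub_const (U T)).const_mul σ
      rw [hw_def]
      exact h3
    · have hden : 0 < c * Real.sqrt h - w h := by
        have := hψcore h hh
        linarith
      have h5 : 2*lam/(c*Real.sqrt h - w h) ≤ 2*lam/(σ * (U (T - h) - x (T - h))) := by
        gcongr
        nlinarith [sq_nonneg c]
      calc 2*lam/(c*Real.sqrt h - w h) ≤ 2*lam/(σ * (U (T - h) - x (T - h))) := h5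
        _ ≤ -σ*D := hDle
        _ = σ * (D * (-1)) := by ring
  have hfin := core_lemma c lam H (σ * (U T - x T)) w hc hm hH0 hε'0 hwc hw0 hψcore hw'core
  exact hfin

private lemma extract_lemma (U : ℝ → ℝ) (T v : ℝ) (hv : 0 < v)
    (h : Filter.limsup (fun h : ℝ => ((|U T - U (T - h)| / Real.sqrt h : ℝ) : EReal))
      (nhdsWithin 0 (Set.Ioi 0)) < ((4 * Real.sqrt v : ℝ) : EReal)) :
    ∃ c δ : ℝ, 0 ≤ c ∧ 0 < δ ∧ c^2 < 16*v ∧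
      ∀ h' ∈ Set.Ioo (0:ℝ) δ, |U T - U (T - h')| ≤ c * Real.sqrt h' := by
  obtain ⟨z, hz1, hz2⟩ := exists_between h
  have hev : ∀ᶠ h' in nhdsWithin 0 (Set.Ioi 0),
      ((|U T - U (T - h')| / Real.sqrt h' : ℝ) : EReal) < z :=
    Filter.eventually_lt_of_limsup_lt hz1
  have hzbot : z ≠ ⊥ := (bot_le.trans_lt hz1).ne'
  have hztop : z ≠ ⊤ := (hz2.trans (EReal.coe_lt_top _)).ne
  set c : ℝ := max z.toReal 0 with hc_def
  have hc0 : 0 ≤ c := le_max_right _ _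
  have hzc : z ≤ ((c : ℝ) : EReal) := by
    rw [← EReal.coe_toReal hztop hzbot]
    exact EReal.coe_le_coe_iff.2 (le_max_left _ _)
  have hc4 : c < 4 * Real.sqrt v := by
    have h1 : z.toReal < 4 * Real.sqrt v := by
      rw [← EReal.coe_toReal hztop hzbot] at hz2
      exact EReal.coe_lt_coe_iff.1 hz2
    have h2 : (0:ℝ) < 4 * Real.sqrt v := by positivity
    exact max_lt h1 h2
  have hc16 : c^2 < 16*v := by
    nlinarith [Real.sq_sqrt hv.le, Real.sqrt_nonneg v]
  have hev2 : ∀ᶠ h' in nhdsWithin 0 (Set.Ioi 0),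
      |U T - U (T - h')| ≤ c * Real.sqrt h' := by
    filter_upwards [hev, self_mem_nhdsWithin] with h' h1 h2
    have h3 : ((|U T - U (T - h')| / Real.sqrt h' : ℝ) : EReal) < ((c : ℝ) : EReal) :=
      lt_of_lt_of_le h1 hzc
    have h4 : |U T - U (T - h')| / Real.sqrt h' < c := EReal.coe_lt_coe_iff.1 h3
    have h5 : 0 < Real.sqrt h' := Real.sqrt_pos.2 h2
    rw [div_lt_iff₀ h5] at h4
    linarith
  rw [Filter.Eventually, Metric.mem_nhdsWithin_iff] at hev2
  obtain ⟨δ, hδ, hsub⟩ := hev2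
  refine ⟨c, δ, hc0, hδ, hc16, ?_⟩
  intro h' hh'
  have : h' ∈ Metric.ball (0:ℝ) δ ∩ Set.Ioi 0 := by
    constructor
    · rw [Metric.mem_ball, Real.dist_eq, sub_zero, abs_of_pos hh'.1]
      exact hh'.2
    · exact hh'.1
  exact hsub this

private lemma setup_lemma (t₀ T G : ℝ) (l U : ℝ → ℝ) (htT : t₀ < T) (hG : 0 < G)
    (hlc : ContinuousOn l (Set.Icc t₀ T)) (hlT : 0 < l T)
    (hhold : Filter.limsup (fun h : ℝ => ((|U T - U (T - h)| / Real.sqrt h : ℝ) : EReal))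
      (nhdsWithin 0 (Set.Ioi 0)) < ((4 * Real.sqrt (l T) : ℝ) : EReal)) :
    ∃ c lam lamMid d₀ H : ℝ, 0 ≤ c ∧ 0 < lam ∧ 0 < 4*lam - c^2/4 ∧ 0 < H ∧ H < T - t₀ ∧
      (c+1) * Real.sqrt H ≤ d₀ ∧ d₀ ≤ G/2 ∧ d₀ ≤ (lamMid - lam)*G/2 ∧ lam ≤ lamMid ∧
      (∀ h ∈ Set.Ioo (0:ℝ) H, |U T - U (T - h)| ≤ c * Real.sqrt h) ∧
      (∀ t ∈ Set.Icc t₀ T, T - H ≤ t → lamMid ≤ l t) := by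
  obtain ⟨c, δ, hc0, hδ, hc16, hhold'⟩ := extract_lemma U T (l T) hlT hhold
  set a : ℝ := c^2/16 with ha_def
  have ha0 : 0 ≤ a := by positivity
  have haT : a < l T := by rw [ha_def]; linarith
  set lam : ℝ := (2*a + l T)/3 with hlam_def
  set lamMid : ℝ := (a + 2*(l T))/3 with hmid_def
  have hlam0 : 0 < lam := by rw [hlam_def]; linarith
  have hm : 0 < 4*lam - c^2/4 := by rw [hlam_def, ha_def]; nlinarith
  have hmidlam : lam < lamMid := by rw [hlam_def, hmid_def]; linarith
  have hmidT : lamMid < l T := by rw [hmid_def]; linarith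
  -- continuity of l at T
  have hctw : ContinuousWithinAt l (Set.Icc t₀ T) T := hlc T ⟨htT.le, le_rfl⟩
  have hev : l ⁻¹' Set.Ioi lamMid ∈ nhdsWithin T (Set.Icc t₀ T) :=
    hctw (isOpen_Ioi.mem_nhds hmidT)
  rw [Metric.mem_nhdsWithin_iff] at hev
  obtain ⟨δ₃, hδ₃, hball⟩ := hev
  set d₀ : ℝ := min (G/2) ((lamMid - lam)*G/2) with hd₀_def
  have hd₀0 : 0 < d₀ := by
    rw [hd₀_def]
    apply lt_min (by positivity)
    have : 0 < lamMid - lam := by linarith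
    positivity
  set H : ℝ := min (min ((T-t₀)/2) δ) (min (δ₃/2) ((d₀/(c+1))^2)) with hH_def
  have hH0 : 0 < H := by
    rw [hH_def]
    apply lt_min (lt_min (by linarith) hδ)
    apply lt_min (by linarith)
    positivity
  have hHa : H ≤ (T-t₀)/2 := le_trans (min_le_left _ _) (min_le_left _ _)
  have hHb : H ≤ δ := le_trans (min_le_left _ _) (min_le_right _ _)
  have hHc : H ≤ δ₃/2 := le_trans (min_le_right _ _) (min_le_left _ _)
  have hHd : H ≤ (d₀/(c+1))^2 := le_trans (min_le_right _ _) (min_le_right _ _)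
  refine ⟨c, lam, lamMid, d₀, H, hc0, hlam0, hm, hH0, by linarith, ?_, min_le_left _ _,
    min_le_right _ _, hmidlam.le, ?_, ?_⟩
  · have h1 : Real.sqrt H ≤ d₀/(c+1) := by
      calc Real.sqrt H ≤ Real.sqrt ((d₀/(c+1))^2) := Real.sqrt_le_sqrt hHd
        _ = d₀/(c+1) := Real.sqrt_sq (by positivity)
    calc (c+1) * Real.sqrt H ≤ (c+1) * (d₀/(c+1)) :=
          mul_le_mul_of_nonneg_left h1 (by linarith)
      _ = d₀ := by field_simp
  · intro h hh
    exact hhold' h ⟨hh.1, lt_of_lt_of_le hh.2 hHb⟩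
  · intro t ht hth
    have : t ∈ Metric.ball T δ₃ ∩ Set.Icc t₀ T := by
      refine ⟨?_, ht⟩
      rw [Metric.mem_ball, Real.dist_eq]
      rw [abs_of_nonpos (by linarith [ht.2])]
      linarith [ht.2]
    exact (hball this).le

private lemma sign_lemma (t₀ T : ℝ) (htT : t₀ < T) (f : ℝ → ℝ)
    (hf : ContinuousOn f (Set.Icc t₀ T)) (hne : ∀ t ∈ Set.Ico t₀ T, f t ≠ 0) :
    (∀ t ∈ Set.Ico t₀ T, 0 < f t) ∨ (∀ t ∈ Set.Ico t₀ T, f t < 0) := by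
  rcases (hne t₀ ⟨le_rfl, htT⟩).lt_or_gt with h0 | h0
  · right
    intro t ht
    rcases (hne t ht).lt_or_gt with h | h
    · exact h
    · exfalso
      have hsub : Set.Icc t₀ t ⊆ Set.Icc t₀ T := Set.Icc_subset_Icc le_rfl ht.2.le
      obtain ⟨t', ht', hft'⟩ := intermediate_value_Icc ht.1 (hf.mono hsub) ⟨h0.le, h.le⟩
      exact hne t' ⟨ht'.1, lt_of_le_of_lt ht'.2 ht.2⟩ hft'
  · left
    intro t ht
    rcases (hne t ht).lt_or_gt with h | h
    · exfalso
      have hsub : Set.Icc t₀ t ⊆ Set.Icc t₀ T := Set.Icc_subset_Icc le_rfl ht.2.le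
      obtain ⟨t', ht', hft'⟩ := intermediate_value_Icc' ht.1 (hf.mono hsub) ⟨h.le, h0.le⟩
      exact hne t' ⟨ht'.1, lt_of_le_of_lt ht'.2 ht.2⟩ hft'
    · exact h



set_option maxHeartbeats 2000000 in
/-- If the driving functions of the chordal two-slit Loewner ODE satisfy the
pointwise left ½-Hölder condition limsup_{h↓0} |U_j(t) − U_j(t−h)|/√h <
4·√(λ_j(t)) at every time t ∈ (t₀,T], then there exists ε > 0, independent of
the initial value, such that every real solution x started off the
singularities exists until T with |x(T) − U₁(T)| > ε and |x(T) − U₂(T)| > ε. -/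
theorem two_slit_uniform_separation (t₀ T : ℝ)
    (ht₀ : 0 ≤ t₀) (htT : t₀ < T)
    (l₁ l₂ U₁ U₂ : ℝ → ℝ)
    (hl₁c : ContinuousOn l₁ (Set.Icc t₀ T)) (hl₂c : ContinuousOn l₂ (Set.Icc t₀ T))
    (hU₁c : ContinuousOn U₁ (Set.Icc t₀ T)) (hU₂c : ContinuousOn U₂ (Set.Icc t₀ T))
    (hl₁ : ∀ t ∈ Set.Icc t₀ T, 0 < l₁ t) (hl₂ : ∀ t ∈ Set.Icc t₀ T, 0 < l₂ t)
    (hsum : ∀ t ∈ Set.Icc t₀ T, l₁ t + l₂ t = 1)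
    (hU : ∀ t ∈ Set.Icc t₀ T, U₁ t < U₂ t)
    (hhold₁ : ∀ t ∈ Set.Ioc t₀ T,
      Filter.limsup
        (fun h : ℝ => ((|U₁ t - U₁ (t - h)| / Real.sqrt h : ℝ) : EReal))
        (nhdsWithin 0 (Set.Ioi 0)) < ((4 * Real.sqrt (l₁ t) : ℝ) : EReal))
    (hhold₂ : ∀ t ∈ Set.Ioc t₀ T,
      Filter.limsup
        (fun h : ℝ => ((|U₂ t - U₂ (t - h)| / Real.sqrt h : ℝ) : EReal))
        (nhdsWithin 0 (Set.Ioi 0)) < ((4 * Real.sqrt (l₂ t) : ℝ) : EReal)) :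
    ∃ ε : ℝ, 0 < ε ∧ ∀ x : ℝ → ℝ,
      ContinuousOn x (Set.Icc t₀ T) →
      (x t₀ ≠ U₁ t₀ ∧ x t₀ ≠ U₂ t₀) →
      (∀ t ∈ Set.Ico t₀ T, x t ≠ U₁ t ∧ x t ≠ U₂ t) →
      (∀ t ∈ Set.Ico t₀ T,
        HasDerivWithinAt x (2 * l₁ t / (x t - U₁ t) + 2 * l₂ t / (x t - U₂ t))
          (Set.Icc t₀ T) t) →
      ε < |x T - U₁ T| ∧ ε < |x T - U₂ T| := by
  have hTmem : T ∈ Set.Icc t₀ T := ⟨htT.le, le_rfl⟩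
  -- uniform gap between the driving functions
  obtain ⟨tm, htm, hmin⟩ := isCompact_Icc.exists_isMinOn (Set.nonempty_Icc.2 htT.le)
    (hU₂c.sub hU₁c)
  set G : ℝ := U₂ tm - U₁ tm with hG_def
  have hGpos : 0 < G := sub_pos.2 (hU tm htm)
  have hGle : ∀ t ∈ Set.Icc t₀ T, G ≤ U₂ t - U₁ t := fun t ht => hmin ht
  -- per-driver constants
  obtain ⟨c₁, lam₁, mid₁, d₁, H₁, hc₁0, hlam₁0, hm₁, hH₁0, hH₁T, hH₁d, hd₁G, hd₁mid,
    hlm₁, hhold₁', hlmid₁⟩ :=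
    setup_lemma t₀ T G l₁ U₁ htT hGpos hl₁c (hl₁ T hTmem) (hhold₁ T ⟨htT, le_rfl⟩)
  obtain ⟨c₂, lam₂, mid₂, d₂, H₂, hc₂0, hlam₂0, hm₂, hH₂0, hH₂T, hH₂d, hd₂G, hd₂mid,
    hlm₂, hhold₂', hlmid₂⟩ :=
    setup_lemma t₀ T G l₂ U₂ htT hGpos hl₂c (hl₂ T hTmem) (hhold₂ T ⟨htT, le_rfl⟩)
  set E₁ : ℝ := Real.sqrt H₁ * Real.exp (-(c₁+1)^2/(2*(4*lam₁ - c₁^2/4)))/4 with hE₁_def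
  set E₂ : ℝ := Real.sqrt H₂ * Real.exp (-(c₂+1)^2/(2*(4*lam₂ - c₂^2/4)))/4 with hE₂_def
  have hE₁0 : 0 < E₁ := by
    rw [hE₁_def]; positivity
  have hE₂0 : 0 < E₂ := by
    rw [hE₂_def]; positivity
  set M : ℝ := min (min E₁ E₂) G with hM_def
  have hM0 : 0 < M := lt_min (lt_min hE₁0 hE₂0) hGpos
  refine ⟨M/2, by positivity, ?_⟩
  have hMle₁ : M ≤ E₁ := by
    rw [hM_def]; exact le_trans (min_le_left _ _) (min_le_left _ _)
  have hMle₂ : M ≤ E₂ := by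
    rw [hM_def]; exact le_trans (min_le_left _ _) (min_le_right _ _)
  have hMleG : M ≤ G := by
    rw [hM_def]; exact min_le_right _ _
  have hME₁ : M/2 < E₁ := by linarith
  have hME₂ : M/2 < E₂ := by linarith
  have hMG : M/2 < G := by linarith
  intro x hxc hx0 hxne hode
  have hode' : ∀ t ∈ Set.Ioo t₀ T,
      HasDerivAt x (2 * l₁ t / (x t - U₁ t) + 2 * l₂ t / (x t - U₂ t)) t := fun t ht =>
    (hode t ⟨ht.1.le, ht.2⟩).hasDerivAt (Icc_mem_nhds ht.1 ht.2)
  have hsign2 := sign_lemma t₀ T htT (fun t => x t - U₂ t) (hxc.sub hU₂c)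
    (fun t ht => sub_ne_zero.2 (hxne t ht).2)
  have hl₂le1 : ∀ t ∈ Set.Icc t₀ T, l₂ t ≤ 1 := fun t ht => by
    have := hsum t ht; have := hl₁ t ht; linarith
  have hl₁le1 : ∀ t ∈ Set.Icc t₀ T, l₁ t ≤ 1 := fun t ht => by
    have := hsum t ht; have := hl₂ t ht; linarith
  rcases hsign2 with hA2 | hB2
  · -- x is above U₂ (hence above U₁)
    have hdpos : ∀ t ∈ Set.Ico t₀ T, 0 < (-1:ℝ) * (U₂ t - x t) := by
      intro t ht; have := hA2 t ht; linarith
    have hodeK : ∀ t ∈ Set.Ioo (T - H₂) T, (-1:ℝ) * (U₂ t - x t) ≤ d₂ →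
        ∃ D, HasDerivAt x D t ∧ 2*lam₂/((-1:ℝ) * (U₂ t - x t)) ≤ -(-1:ℝ)*D := by
      intro t ht _
      have htlt : t₀ < t := by linarith [ht.1, hH₂T]
      have htIco : t ∈ Set.Ico t₀ T := ⟨htlt.le, ht.2⟩
      have htIcc : t ∈ Set.Icc t₀ T := ⟨htlt.le, ht.2.le⟩
      refine ⟨_, hode' t ⟨htlt, ht.2⟩, ?_⟩
      have hd : 0 < x t - U₂ t := hA2 t htIco
      have hxU₁ : 0 < x t - U₁ t := by have := hU t htIcc; linarith
      have hl₂t : mid₂ ≤ l₂ t := hlmid₂ t htIcc (by linarith [ht.1])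
      have h1 : 2*lam₂/(x t - U₂ t) ≤ 2*(l₂ t)/(x t - U₂ t) := by
        gcongr
        linarith
      have h2 : 0 < 2*(l₁ t)/(x t - U₁ t) := div_pos (by linarith [hl₁ t htIcc]) hxU₁
      rw [show (-1:ℝ) * (U₂ t - x t) = x t - U₂ t by ring]
      rw [show -(-1:ℝ) = (1:ℝ) by norm_num, one_mul]
      linarith
    have hkey₂ := key_lemma t₀ T c₂ lam₂ d₂ H₂ x U₂ (-1) hc₂0 (Or.inr rfl) hm₂ hH₂0 hH₂T
      hH₂d hhold₂' hxc hU₂c hdpos hodeK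
    have h1 : E₂ ≤ x T - U₂ T := by rw [hE₂_def]; linarith [hkey₂]
    have hgapT := hGle T hTmem
    constructor
    · calc M/2 < G := hMG
        _ ≤ x T - U₁ T := by linarith
        _ ≤ |x T - U₁ T| := le_abs_self _
    · calc M/2 < E₂ := hME₂
        _ ≤ x T - U₂ T := h1
        _ ≤ |x T - U₂ T| := le_abs_self _
  · -- x is below U₂
    have hsign1 := sign_lemma t₀ T htT (fun t => x t - U₁ t) (hxc.sub hU₁c)
      (fun t ht => sub_ne_zero.2 (hxne t ht).1)
    rcases hsign1 with hM1 | hB1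
    · -- middle region : U₁ < x < U₂
      -- U₁ side
      have hdpos1 : ∀ t ∈ Set.Ico t₀ T, 0 < (-1:ℝ) * (U₁ t - x t) := by
        intro t ht; have := hM1 t ht; linarith
      have hodeK1 : ∀ t ∈ Set.Ioo (T - H₁) T, (-1:ℝ) * (U₁ t - x t) ≤ d₁ →
          ∃ D, HasDerivAt x D t ∧ 2*lam₁/((-1:ℝ) * (U₁ t - x t)) ≤ -(-1:ℝ)*D := by
        intro t ht hdle
        have htlt : t₀ < t := by linarith [ht.1, hH₁T]
        have htIco : t ∈ Set.Ico t₀ T := ⟨htlt.le, ht.2⟩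
        have htIcc : t ∈ Set.Icc t₀ T := ⟨htlt.le, ht.2.le⟩
        refine ⟨_, hode' t ⟨htlt, ht.2⟩, ?_⟩
        have hd : 0 < x t - U₁ t := hM1 t htIco
        have hdd : x t - U₁ t ≤ d₁ := by linarith [hdle]
        have hgap := hGle t htIcc
        have hxU₂ : G/2 ≤ U₂ t - x t := by linarith [hd₁G]
        have hxU₂pos : 0 < U₂ t - x t := by linarith [hGpos]
        have hl₁t : mid₁ ≤ l₁ t := hlmid₁ t htIcc (by linarith [ht.1])
        have hterm : 2*(l₂ t)/(U₂ t - x t) ≤ 4/G := by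
          have h5 : 2*(l₂ t)/(U₂ t - x t) ≤ 2/(G/2) :=
            div_le_div₀ (by norm_num) (by linarith [hl₂le1 t htIcc]) (by linarith) hxU₂
          have h6 : (2:ℝ)/(G/2) = 4/G := by
            rw [div_div_eq_mul_div]; norm_num
          linarith
        have hrw : 2*(l₂ t)/(x t - U₂ t) = -(2*(l₂ t)/(U₂ t - x t)) := by
          rw [show x t - U₂ t = -(U₂ t - x t) by ring, div_neg]
        have hsplit : 2*(l₁ t)/(x t - U₁ t)
            = 2*lam₁/(x t - U₁ t) + 2*(l₁ t - lam₁)/(x t - U₁ t) := by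
          rw [← add_div]
          ring_nf
        have hmono : 2*(mid₁ - lam₁)/(x t - U₁ t) ≤ 2*(l₁ t - lam₁)/(x t - U₁ t) := by
          gcongr
        have hlow : 4/G ≤ 2*(mid₁ - lam₁)/(x t - U₁ t) := by
          rw [div_le_div_iff₀ hGpos hd]
          nlinarith [hd₁mid]
        rw [show (-1:ℝ) * (U₁ t - x t) = x t - U₁ t by ring]
        rw [show -(-1:ℝ) = (1:ℝ) by norm_num, one_mul]
        linarith
      have hkey₁ := key_lemma t₀ T c₁ lam₁ d₁ H₁ x U₁ (-1) hc₁0 (Or.inr rfl) hm₁ hH₁0 hH₁T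
        hH₁d hhold₁' hxc hU₁c hdpos1 hodeK1
      have h1 : E₁ ≤ x T - U₁ T := by rw [hE₁_def]; linarith [hkey₁]
      -- U₂ side
      have hdpos2 : ∀ t ∈ Set.Ico t₀ T, 0 < (1:ℝ) * (U₂ t - x t) := by
        intro t ht; have := hB2 t ht; linarith
      have hodeK2 : ∀ t ∈ Set.Ioo (T - H₂) T, (1:ℝ) * (U₂ t - x t) ≤ d₂ →
          ∃ D, HasDerivAt x D t ∧ 2*lam₂/((1:ℝ) * (U₂ t - x t)) ≤ -(1:ℝ)*D := by
        intro t ht hdle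
        have htlt : t₀ < t := by linarith [ht.1, hH₂T]
        have htIco : t ∈ Set.Ico t₀ T := ⟨htlt.le, ht.2⟩
        have htIcc : t ∈ Set.Icc t₀ T := ⟨htlt.le, ht.2.le⟩
        refine ⟨_, hode' t ⟨htlt, ht.2⟩, ?_⟩
        have hd : 0 < U₂ t - x t := by have := hB2 t htIco; linarith
        have hdd : U₂ t - x t ≤ d₂ := by linarith [hdle]
        have hgap := hGle t htIcc
        have hxU₁ : G/2 ≤ x t - U₁ t := by linarith [hd₂G]
        have hxU₁pos : 0 < x t - U₁ t := by linarith [hGpos]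
        have hl₂t : mid₂ ≤ l₂ t := hlmid₂ t htIcc (by linarith [ht.1])
        have hterm : 2*(l₁ t)/(x t - U₁ t) ≤ 4/G := by
          have h5 : 2*(l₁ t)/(x t - U₁ t) ≤ 2/(G/2) :=
            div_le_div₀ (by norm_num) (by linarith [hl₁le1 t htIcc]) (by linarith) hxU₁
          have h6 : (2:ℝ)/(G/2) = 4/G := by
            rw [div_div_eq_mul_div]; norm_num
          linarith
        have hrw : 2*(l₂ t)/(x t - U₂ t) = -(2*(l₂ t)/(U₂ t - x t)) := by
          rw [show x t - U₂ t = -(U₂ t - x t) by ring, div_neg]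
        have hsplit : 2*(l₂ t)/(U₂ t - x t)
            = 2*lam₂/(U₂ t - x t) + 2*(l₂ t - lam₂)/(U₂ t - x t) := by
          rw [← add_div]
          ring_nf
        have hmono : 2*(mid₂ - lam₂)/(U₂ t - x t) ≤ 2*(l₂ t - lam₂)/(U₂ t - x t) := by
          gcongr
        have hlow : 4/G ≤ 2*(mid₂ - lam₂)/(U₂ t - x t) := by
          rw [div_le_div_iff₀ hGpos hd]
          nlinarith [hd₂mid]
        rw [show (1:ℝ) * (U₂ t - x t) = U₂ t - x t by ring, neg_one_mul]
        linarith
      have hkey₂ := key_lemma t₀ T c₂ lam₂ d₂ H₂ x U₂ 1 hc₂0 (Or.inl rfl) hm₂ hH₂0 hH₂T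
        hH₂d hhold₂' hxc hU₂c hdpos2 hodeK2
      have h2 : E₂ ≤ U₂ T - x T := by rw [hE₂_def]; linarith [hkey₂]
      constructor
      · calc M/2 < E₁ := hME₁
          _ ≤ x T - U₁ T := h1
          _ ≤ |x T - U₁ T| := le_abs_self _
      · calc M/2 < E₂ := hME₂
          _ ≤ U₂ T - x T := h2
          _ ≤ |x T - U₂ T| := by rw [abs_sub_comm]; exact le_abs_self _
    · -- x is below U₁
      have hdpos1 : ∀ t ∈ Set.Ico t₀ T, 0 < (1:ℝ) * (U₁ t - x t) := by
        intro t ht; have := hB1 t ht; linarith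
      have hodeK1 : ∀ t ∈ Set.Ioo (T - H₁) T, (1:ℝ) * (U₁ t - x t) ≤ d₁ →
          ∃ D, HasDerivAt x D t ∧ 2*lam₁/((1:ℝ) * (U₁ t - x t)) ≤ -(1:ℝ)*D := by
        intro t ht _
        have htlt : t₀ < t := by linarith [ht.1, hH₁T]
        have htIco : t ∈ Set.Ico t₀ T := ⟨htlt.le, ht.2⟩
        have htIcc : t ∈ Set.Icc t₀ T := ⟨htlt.le, ht.2.le⟩
        refine ⟨_, hode' t ⟨htlt, ht.2⟩, ?_⟩
        have hd : 0 < U₁ t - x t := by have := hB1 t htIco; linarith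
        have hgap := hGle t htIcc
        have hxU₂ : 0 < U₂ t - x t := by linarith [hGpos]
        have hl₁t : mid₁ ≤ l₁ t := hlmid₁ t htIcc (by linarith [ht.1])
        have hrw1 : 2*(l₁ t)/(x t - U₁ t) = -(2*(l₁ t)/(U₁ t - x t)) := by
          rw [show x t - U₁ t = -(U₁ t - x t) by ring, div_neg]
        have hrw2 : 2*(l₂ t)/(x t - U₂ t) = -(2*(l₂ t)/(U₂ t - x t)) := by
          rw [show x t - U₂ t = -(U₂ t - x t) by ring, div_neg]
        have h1 : 2*lam₁/(U₁ t - x t) ≤ 2*(l₁ t)/(U₁ t - x t) := by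
          gcongr
          linarith
        have h2 : 0 < 2*(l₂ t)/(U₂ t - x t) := div_pos (by linarith [hl₂ t htIcc]) hxU₂
        rw [show (1:ℝ) * (U₁ t - x t) = U₁ t - x t by ring, neg_one_mul]
        linarith
      have hkey₁ := key_lemma t₀ T c₁ lam₁ d₁ H₁ x U₁ 1 hc₁0 (Or.inl rfl) hm₁ hH₁0 hH₁T
        hH₁d hhold₁' hxc hU₁c hdpos1 hodeK1
      have h1 : E₁ ≤ U₁ T - x T := by rw [hE₁_def]; linarith [hkey₁]
      have hgapT := hGle T hTmem
      constructor
      · calc M/2 < E₁ := hME₁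
          _ ≤ U₁ T - x T := h1
          _ ≤ |x T - U₁ T| := by rw [abs_sub_comm]; exact le_abs_self _
      · calc M/2 < G := hMG
          _ ≤ U₂ T - x T := by linarith
          _ ≤ |x T - U₂ T| := by rw [abs_sub_comm]; exact le_abs_self _


end
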